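/- Let p be prime, N ≥ 1, α_1 ≥ ⋯ ≥ α_N ≥ 1 integers, D ∈ ℕ, and set α := ∑ α_i. Define the conjugate partition α_j' := #{i : α_i ≥ j}, and define (D_1,…,D_α) to be the sequence consisting of α_1' copies of 1, then α_2' copies of p, …, then α_{α_1}' copies of p^{α_1−1}. Define ν_p(ᾱ, n̄) := ∑_{i=1}^N ν_p(α_i, n_i), where ν_p(α_i, n_i) = α_i − ord_p(n_i+1) if n_i ≤ p^{α_i}−1 and ∞ otherwise. Then the minimum of ν_p(ᾱ, n̄) over all n̄ ∈ ℕ^N with n_1 + ⋯ + n_N ≤ D equals α − max{0 ≤ t ≤ α : D_1 + ⋯ + D_t ≤ D/(p−1)}. -/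

import Mathlib

open Finset

lemma fin_count (N v : ℕ) (hv : v ≤ N) :
    ((univ : Finset (Fin N)).filter (fun i : Fin N => (i:ℕ) < v)).card = v := by
  have h : (univ : Finset (Fin N)).filter (fun i : Fin N => (i:ℕ) < v)
      = (Finset.range v).attachFin (fun m hm => lt_of_lt_of_le (mem_range.mp hm) hv) := by
    ext i; simp [Finset.mem_attachFin]
  rw [h, Finset.card_attachFin, card_range]

lemma tele (h : ℕ → ℕ) (hm : Monotone h) : ∀ n, ∑ j ∈ Icc 1 n, (h j - h (j-1)) = h n - h 0 := by
  intro n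
  induction n with
  | zero => simp
  | succ n ih =>
      rw [Finset.sum_Icc_succ_top (by omega), ih]
      have h1 : h 0 ≤ h n := hm (by omega)
      have h2 : h n ≤ h (n+1) := hm (by omega)
      simp only [Nat.add_sub_cancel]
      omega

lemma swap_count {A B : Type*} (s : Finset A) (t : Finset B) (P : A → B → Prop)
    [∀ a b, Decidable (P a b)] (w : B → ℕ) :
    ∑ a ∈ s, ∑ b ∈ t.filter (fun b => P a b), w b
      = ∑ b ∈ t, (s.filter (fun a => P a b)).card * w b := by
  simp_rw [Finset.sum_filter]
  rw [Finset.sum_comm]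
  refine Finset.sum_congr rfl fun b _ => ?_
  rw [← Finset.sum_filter, Finset.sum_const, smul_eq_mul]

lemma initial_seg (L : ℕ) (F : Finset ℕ) (hF : F ⊆ Icc 1 L)
    (hdc : ∀ a ∈ F, ∀ b, 1 ≤ b → b ≤ a → b ∈ F) : F = Icc 1 F.card := by
  have hsub : F ⊆ Icc 1 F.card := by
    intro j hj
    have h1 : 1 ≤ j := (mem_Icc.mp (hF hj)).1
    have h2 : Icc 1 j ⊆ F := fun b hb => hdc j hj b (mem_Icc.mp hb).1 (mem_Icc.mp hb).2
    have := Finset.card_le_card h2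
    rw [Nat.card_Icc] at this
    exact mem_Icc.mpr ⟨h1, by omega⟩
  exact Finset.eq_of_subset_of_card_le hsub (by rw [Nat.card_Icc]; omega)

lemma count_id {N : ℕ} (L : ℕ) (k : Fin N → ℕ) (hk : ∀ i, k i ≤ L) (w : ℕ → ℕ) :
    ∑ i, ∑ j ∈ Icc 1 (k i), w j
      = ∑ j ∈ Icc 1 L, ((univ : Finset (Fin N)).filter (fun i => j ≤ k i)).card * w j := by
  have h := swap_count (univ : Finset (Fin N)) (Icc 1 L) (fun i j => j ≤ k i) w
  have he : ∀ i : Fin N, (Icc 1 L).filter (fun j => j ≤ k i) = Icc 1 (k i) := by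
    intro i; ext j; simp only [mem_filter, mem_Icc]; have := hk i; omega
  rw [← h]
  exact Finset.sum_congr rfl fun i _ => by rw [he i]

theorem stmt_12 (p : ℕ) (hp : p.Prime) (N : ℕ) (hN : 0 < N)
    (α : Fin N → ℕ) (hpos : ∀ i, 0 < α i)
    (hmono : ∀ i j : Fin N, i ≤ j → α j ≤ α i)
    (D : ℕ)
    (αtot : ℕ) (hαtot : αtot = ∑ i, α i)
    (α' : ℕ → ℕ)
    (hα' : ∀ j, α' j = (Finset.univ.filter (fun i : Fin N => j ≤ α i)).card)
    -- Dseq t is the t-th element of the sequence consisting of α'_1 copies of 1,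
    -- then α'_2 copies of p, …, then α'_{α_1} copies of p^{α_1-1}:
    (Dseq : ℕ → ℕ)
    (hD : ∀ t, Dseq t
      = p ^ ((Finset.Icc 1 (α ⟨0, hN⟩)).filter
          (fun j => ∑ k ∈ Finset.Icc 1 j, α' k < t)).card)
    (νp : ℕ → ℕ → ℕ∞)
    (hν : ∀ a n : ℕ, νp a n
      = if n ≤ p ^ a - 1 then ((a - padicValNat p (n + 1) : ℕ) : ℕ∞) else ⊤) :
    sInf {v : ℕ∞ | ∃ n : Fin N → ℕ, ∑ i, n i ≤ D ∧ v = ∑ i, νp (α i) (n i)}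
      = ((αtot -
          ((Finset.range (αtot + 1)).filter
            (fun t => (p - 1) * ∑ k ∈ Finset.Icc 1 t, Dseq k ≤ D)).max' 
            (by
              refine ⟨0, ?_⟩
              simp) : ℕ) : ℕ∞) := by
  classical
  have hp2 : 2 ≤ p := hp.two_le
  set L := α ⟨0, hN⟩ with hLdef
  have hαL : ∀ i, α i ≤ L := fun i => hmono ⟨0, hN⟩ i (by simp [Fin.le_def])
  set S : ℕ → ℕ := fun j => ∑ k ∈ Icc 1 j, α' k with hSdef
  have hSmono : Monotone S := fun a b hab =>
    Finset.sum_le_sum_of_subset (Finset.Icc_subset_Icc_right hab)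
  have hS0 : S 0 = 0 := by simp [hSdef]
  have hα'N : ∀ j, α' j ≤ N := by
    intro j; rw [hα' j]
    exact le_trans (Finset.card_filter_le _ _) (by simp)
  have hα'anti : ∀ a b, a ≤ b → α' b ≤ α' a := by
    intro a b hab; rw [hα' a, hα' b]
    refine Finset.card_le_card (fun i hi => ?_)
    simp only [mem_filter, mem_univ, true_and] at hi ⊢
    omega
  have hSstep : ∀ j, S (j+1) = S j + α' (j+1) := fun j => Finset.sum_Icc_succ_top (by omega) _
  have hSL : S L = αtot := by
    have h := count_id L α hαL (fun _ => 1)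
    simp only [Finset.sum_const, Nat.card_Icc, Nat.add_sub_cancel, smul_eq_mul, mul_one] at h
    rw [hαtot, hSdef]
    simp only [hα']
    exact h.symm
  have hDs : ∀ t, Dseq t = p ^ ((Icc 1 L).filter (fun j => S j < t)).card := hD
  have htele : ∀ m, ∑ j ∈ Icc 1 m, (p^j - p^(j-1)) = p^m - 1 := by
    intro m
    have := tele (fun n => p^n) (fun a b hab => Nat.pow_le_pow_right hp.one_lt.le hab) m
    simpa using this
  -- identity I1
  have I1 : ∀ T, ∑ t ∈ Icc 1 T, Dseq t
      = T + ∑ j ∈ Icc 1 L, ((Icc 1 T).filter (fun t => S j < t)).card * (p^j - p^(j-1)) := by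
    intro T
    have hDt : ∀ t, Dseq t = 1 + ∑ j ∈ (Icc 1 L).filter (fun j => S j < t), (p^j - p^(j-1)) := by
      intro t
      have hfi := initial_seg L ((Icc 1 L).filter (fun j => S j < t)) (filter_subset _ _)
        (by
          intro a ha b hb1 hba
          simp only [mem_filter, mem_Icc] at ha ⊢
          exact ⟨⟨hb1, le_trans hba ha.1.2⟩, lt_of_le_of_lt (hSmono hba) ha.2⟩)
      rw [hDs t]
      conv_rhs => rw [hfi]
      rw [htele]
      have h1 : 1 ≤ p ^ ((Icc 1 L).filter (fun j => S j < t)).card := Nat.one_le_pow _ _ hp.pos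
      omega
    calc ∑ t ∈ Icc 1 T, Dseq t
        = ∑ t ∈ Icc 1 T, (1 + ∑ j ∈ (Icc 1 L).filter (fun j => S j < t), (p^j - p^(j-1))) :=
          Finset.sum_congr rfl fun t _ => hDt t
      _ = T + ∑ t ∈ Icc 1 T, ∑ j ∈ (Icc 1 L).filter (fun j => S j < t), (p^j - p^(j-1)) := by
          rw [Finset.sum_add_distrib]
          simp [Nat.card_Icc]
      _ = T + ∑ j ∈ Icc 1 L, ((Icc 1 T).filter (fun t => S j < t)).card * (p^j - p^(j-1)) := by
          rw [swap_count (Icc 1 T) (Icc 1 L) (fun t j => S j < t) (fun j => p^j - p^(j-1))]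
  have I1b : ∀ j T, ((Icc 1 T).filter (fun t => S j < t)).card = T - min T (S j) := by
    intro j T
    have h : (Icc 1 T).filter (fun t => S j < t) = Ioc (min T (S j)) T := by
      ext x; simp only [mem_filter, mem_Icc, mem_Ioc]; omega
    rw [h, Nat.card_Ioc]
  -- key identity K
  have keyid : ∀ d : ℕ → ℕ,
      (∑ j ∈ Icc 1 L, d j)
        + ∑ j ∈ Icc 1 L, (∑ j' ∈ (Icc 1 L).filter (fun j' => j < j'), d j') * (p^j - p^(j-1))
      = ∑ j ∈ Icc 1 L, p^(j-1) * d j := by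
    intro d
    have h1 : ∑ j ∈ Icc 1 L, (∑ j' ∈ (Icc 1 L).filter (fun j' => j < j'), d j') * (p^j - p^(j-1))
        = ∑ j' ∈ Icc 1 L, d j' * (p^(j'-1) - 1) := by
      calc ∑ j ∈ Icc 1 L, (∑ j' ∈ (Icc 1 L).filter (fun j' => j < j'), d j') * (p^j - p^(j-1))
          = ∑ j ∈ Icc 1 L, ∑ j' ∈ Icc 1 L, (if j < j' then d j' * (p^j - p^(j-1)) else 0) := by
            refine Finset.sum_congr rfl fun j _ => ?_
            rw [Finset.sum_mul, Finset.sum_filter]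
        _ = ∑ j' ∈ Icc 1 L, ∑ j ∈ Icc 1 L, (if j < j' then d j' * (p^j - p^(j-1)) else 0) :=
            Finset.sum_comm
        _ = ∑ j' ∈ Icc 1 L, d j' * (p^(j'-1) - 1) := by
            refine Finset.sum_congr rfl fun j' hj' => ?_
            rw [← Finset.sum_filter]
            have hfil : (Icc 1 L).filter (fun j => j < j') = Icc 1 (j'-1) := by
              ext x
              simp only [mem_filter, mem_Icc]
              have := mem_Icc.mp hj'
              omega
            rw [hfil, ← Finset.mul_sum, htele]
    rw [h1, ← Finset.sum_add_distrib]
    refine Finset.sum_congr rfl fun j hj => ?_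
    have hx : 1 ≤ p^(j-1) := Nat.one_le_pow _ _ hp.pos
    obtain ⟨y, hy⟩ : ∃ y, p^(j-1) = y + 1 := ⟨p^(j-1) - 1, by omega⟩
    rw [hy]
    simp only [Nat.add_sub_cancel]
    ring
  -- lower bound
  have hdist : ∀ c : ℕ → ℕ,
      (p-1) * ∑ j ∈ Icc 1 L, p^(j-1) * c j = ∑ j ∈ Icc 1 L, c j * (p^j - p^(j-1)) := by
    intro c
    rw [Finset.mul_sum]
    refine Finset.sum_congr rfl fun j hj => ?_
    have hj1 : 1 ≤ j := (mem_Icc.mp hj).1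
    obtain ⟨j', rfl⟩ : ∃ j', j = j' + 1 := ⟨j-1, by omega⟩
    simp only [Nat.add_sub_cancel]
    have hpow : p * p^j' = p^(j'+1) := by rw [pow_succ]; ring
    rw [← mul_assoc, Nat.sub_one_mul, hpow, mul_comm]
  have LB : ∀ k : Fin N → ℕ, (∀ i, k i ≤ α i) →
      (p-1) * ∑ t ∈ Icc 1 (∑ i, k i), Dseq t ≤ ∑ i, (p^(k i) - 1) := by
    intro k hk
    have hkL : ∀ i, k i ≤ L := fun i => le_trans (hk i) (hαL i)
    set c : ℕ → ℕ := fun j => ((univ : Finset (Fin N)).filter (fun i => j ≤ k i)).card with hcdef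
    have hcα : ∀ j, c j ≤ α' j := by
      intro j
      rw [hα' j, hcdef]
      refine Finset.card_le_card fun i hi => ?_
      simp only [mem_filter, mem_univ, true_and] at hi ⊢
      exact le_trans hi (hk i)
    have hTc : ∑ i, k i = ∑ j ∈ Icc 1 L, c j := by
      have h := count_id L k hkL (fun _ => 1)
      simpa [Nat.card_Icc] using h
    have hcost : ∑ i, (p^(k i) - 1) = ∑ j ∈ Icc 1 L, c j * (p^j - p^(j-1)) := by
      have h := count_id L k hkL (fun j => p^j - p^(j-1))
      rw [← h]
      exact Finset.sum_congr rfl fun i _ => (htele (k i)).symm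
    have hr : ∀ j ∈ Icc 1 L, ((Icc 1 (∑ i, k i)).filter (fun t => S j < t)).card
        ≤ ∑ j' ∈ (Icc 1 L).filter (fun j' => j < j'), c j' := by
      intro j hj
      rw [I1b]
      have hIoc : (Icc 1 L).filter (fun j' => j < j') = Ioc j L := by
        ext x
        simp only [mem_filter, mem_Icc, mem_Ioc]
        omega
      have hsplit : (∑ j' ∈ Icc 1 j, c j') + (∑ j' ∈ (Icc 1 L).filter (fun j' => j < j'), c j')
          = ∑ j' ∈ Icc 1 L, c j' := by
        rw [hIoc]
        exact Finset.sum_Ioc_consecutive _ (Nat.zero_le j) (mem_Icc.mp hj).2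
      have hCS : ∑ j' ∈ Icc 1 j, c j' ≤ S j := by
        have hSj : S j = ∑ j' ∈ Icc 1 j, α' j' := rfl
        rw [hSj]
        exact Finset.sum_le_sum fun j' _ => hcα j'
      omega
    calc (p-1) * ∑ t ∈ Icc 1 (∑ i, k i), Dseq t
        ≤ (p-1) * ((∑ j ∈ Icc 1 L, c j)
            + ∑ j ∈ Icc 1 L, (∑ j' ∈ (Icc 1 L).filter (fun j' => j < j'), c j') * (p^j - p^(j-1))) := by
          refine Nat.mul_le_mul_left _ ?_
          rw [I1]
          exact add_le_add (le_of_eq hTc) (Finset.sum_le_sum fun j hj => Nat.mul_le_mul_right _ (hr j hj))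
      _ = (p-1) * ∑ j ∈ Icc 1 L, p^(j-1) * c j := by rw [keyid c]
      _ = ∑ j ∈ Icc 1 L, c j * (p^j - p^(j-1)) := hdist c
      _ = ∑ i, (p^(k i) - 1) := hcost.symm
  have hne : ((range (αtot+1)).filter (fun t => (p - 1) * ∑ k ∈ Icc 1 t, Dseq k ≤ D)).Nonempty :=
    ⟨0, by simp⟩
  set t0 := ((range (αtot+1)).filter (fun t => (p - 1) * ∑ k ∈ Icc 1 t, Dseq k ≤ D)).max' hne
    with ht0def
  show sInf {v : ℕ∞ | ∃ n : Fin N → ℕ, ∑ i, n i ≤ D ∧ v = ∑ i, νp (α i) (n i)}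
      = ((αtot - t0 : ℕ) : ℕ∞)
  have ht0mem : t0 ∈ (range (αtot+1)).filter (fun t => (p - 1) * ∑ k ∈ Icc 1 t, Dseq k ≤ D) :=
    Finset.max'_mem _ hne
  rw [mem_filter, mem_range] at ht0mem
  obtain ⟨ht0r, ht0D⟩ := ht0mem
  have ht0α : t0 ≤ αtot := by omega
  -- the achieving construction
  set m : ℕ → ℕ := fun j => min t0 (S j) - min t0 (S (j-1)) with hmdef
  have hmα : ∀ j, 1 ≤ j → m j ≤ α' j := by
    intro j hj
    obtain ⟨j', rfl⟩ : ∃ j', j = j' + 1 := ⟨j-1, by omega⟩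
    have e1 := hSstep j'
    have hm : m (j'+1) = min t0 (S (j'+1)) - min t0 (S j') := by rw [hmdef]; simp
    omega
  have hmanti : ∀ a b, 1 ≤ a → a ≤ b → m b ≤ m a := by
    have hstep : ∀ j, 1 ≤ j → m (j+1) ≤ m j := by
      intro j hj
      obtain ⟨j', rfl⟩ : ∃ j', j = j' + 1 := ⟨j-1, by omega⟩
      show m (j'+2) ≤ m (j'+1)
      have e1 := hSstep j'
      have e2 : S (j'+2) = S (j'+1) + α' (j'+2) := hSstep (j'+1)
      have e3 : α' (j'+2) ≤ α' (j'+1) := hα'anti _ _ (by omega)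
      have hm1 : m (j'+1) = min t0 (S (j'+1)) - min t0 (S j') := by rw [hmdef]; simp
      have hm2 : m (j'+2) = min t0 (S (j'+2)) - min t0 (S (j'+1)) := by rw [hmdef]; simp
      omega
    intro a b ha hab
    induction b, hab using Nat.le_induction with
    | base => exact le_refl _
    | succ b hab ih => exact le_trans (hstep b (le_trans ha hab)) ih
  have hfinseg : ∀ (i : Fin N) j, (i:ℕ) < α' j → j ≤ α i := by
    intro i j h
    by_contra hcon
    push_neg at hcon
    have hsub : (univ : Finset (Fin N)).filter (fun i' : Fin N => j ≤ α i')
        ⊆ (univ : Finset (Fin N)).filter (fun i' : Fin N => (i':ℕ) < (i:ℕ)) := by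
      intro i' hi'
      simp only [mem_filter, mem_univ, true_and] at hi' ⊢
      by_contra h2
      push_neg at h2
      have := hmono i i' (Fin.le_def.mpr h2)
      omega
    have hcard := Finset.card_le_card hsub
    rw [fin_count N (i:ℕ) i.isLt.le] at hcard
    rw [hα' j] at h
    omega
  set kk : Fin N → ℕ := fun i => ((Icc 1 L).filter (fun j => (i:ℕ) < m j)).card with hkdef
  have hkα : ∀ i, kk i ≤ α i := by
    intro i
    have hsub : (Icc 1 L).filter (fun j => (i:ℕ) < m j) ⊆ Icc 1 (α i) := by
      intro j hj
      simp only [mem_filter, mem_Icc] at hj ⊢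
      have h1 : (i:ℕ) < α' j := lt_of_lt_of_le hj.2 (hmα j hj.1.1)
      exact ⟨hj.1.1, hfinseg i j h1⟩
    have hc := Finset.card_le_card hsub
    rw [Nat.card_Icc] at hc
    have hki : kk i = ((Icc 1 L).filter (fun j => (i:ℕ) < m j)).card := by rw [hkdef]
    omega
  have hkL : ∀ i, kk i ≤ L := fun i => le_trans (hkα i) (hαL i)
  have hcj : ∀ j ∈ Icc 1 L, ((univ : Finset (Fin N)).filter (fun i => j ≤ kk i)).card = m j := by
    intro j hj
    obtain ⟨hj1, hjL⟩ := mem_Icc.mp hj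
    have hset : (univ : Finset (Fin N)).filter (fun i => j ≤ kk i)
        = (univ : Finset (Fin N)).filter (fun i : Fin N => (i:ℕ) < m j) := by
      ext i
      simp only [mem_filter, mem_univ, true_and]
      have hki : kk i = ((Icc 1 L).filter (fun j' => (i:ℕ) < m j')).card := by rw [hkdef]
      constructor
      · intro hkij
        by_contra hcon
        push_neg at hcon
        have hsub : (Icc 1 L).filter (fun j' => (i:ℕ) < m j') ⊆ Icc 1 (j-1) := by
          intro j'' hj''
          simp only [mem_filter, mem_Icc] at hj'' ⊢
          refine ⟨hj''.1.1, ?_⟩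
          by_contra hc2
          push_neg at hc2
          have := hmanti j j'' hj1 (by omega)
          omega
        have hle := Finset.card_le_card hsub
        rw [Nat.card_Icc] at hle
        omega
      · intro him
        have hsub : Icc 1 j ⊆ (Icc 1 L).filter (fun j' => (i:ℕ) < m j') := by
          intro j' hj'
          obtain ⟨h1, h2⟩ := mem_Icc.mp hj'
          simp only [mem_filter, mem_Icc]
          exact ⟨⟨h1, le_trans h2 hjL⟩, lt_of_lt_of_le him (hmanti j' j h1 h2)⟩
        have hle := Finset.card_le_card hsub
        rw [Nat.card_Icc] at hle
        omega
    rw [hset, fin_count N (m j) (le_trans (hmα j hj1) (hα'N j))]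
  have hmsum : ∀ jm, ∑ j ∈ Icc 1 jm, m j = min t0 (S jm) := by
    intro jm
    have ht := tele (fun j => min t0 (S j))
      (fun a b hab => min_le_min (le_refl t0) (hSmono hab)) jm
    simpa [hmdef, hS0] using ht
  have hTk : ∑ i, kk i = t0 := by
    have h := count_id L kk hkL (fun _ => 1)
    simp only [Finset.sum_const, Nat.card_Icc, Nat.add_sub_cancel, smul_eq_mul, mul_one] at h
    rw [h]
    rw [Finset.sum_congr rfl hcj, hmsum L, hSL]
    omega
  have hDsum : ∑ t ∈ Icc 1 t0, Dseq t = ∑ j ∈ Icc 1 L, p^(j-1) * m j := by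
    rw [I1 t0, ← keyid m]
    congr 1
    · rw [hmsum L, hSL]
      omega
    · refine Finset.sum_congr rfl fun j hj => ?_
      congr 1
      rw [I1b]
      have hIoc : (Icc 1 L).filter (fun j' => j < j') = Ioc j L := by
        ext x
        simp only [mem_filter, mem_Icc, mem_Ioc]
        omega
      have hsplit : (∑ j' ∈ Icc 1 j, m j') + (∑ j' ∈ (Icc 1 L).filter (fun j' => j < j'), m j')
          = ∑ j' ∈ Icc 1 L, m j' := by
        rw [hIoc]
        exact Finset.sum_Ioc_consecutive _ (Nat.zero_le j) (mem_Icc.mp hj).2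
      have h1 := hmsum j
      have h2 := hmsum L
      rw [hSL] at h2
      omega
  have hcosteq : ∑ i, (p^(kk i) - 1) = (p-1) * ∑ t ∈ Icc 1 t0, Dseq t := by
    have hcost : ∑ i, (p^(kk i) - 1)
        = ∑ j ∈ Icc 1 L, ((univ : Finset (Fin N)).filter (fun i => j ≤ kk i)).card * (p^j - p^(j-1)) := by
      have h := count_id L kk hkL (fun j => p^j - p^(j-1))
      rw [← h]
      exact Finset.sum_congr rfl fun i _ => (htele (kk i)).symm
    calc ∑ i, (p^(kk i) - 1)
        = ∑ j ∈ Icc 1 L, ((univ : Finset (Fin N)).filter (fun i => j ≤ kk i)).card * (p^j - p^(j-1)) := hcost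
      _ = ∑ j ∈ Icc 1 L, m j * (p^j - p^(j-1)) :=
          Finset.sum_congr rfl fun j hj => by rw [hcj j hj]
      _ = (p-1) * ∑ j ∈ Icc 1 L, p^(j-1) * m j := (hdist m).symm
      _ = (p-1) * ∑ t ∈ Icc 1 t0, Dseq t := by rw [hDsum]
  haveI := Fact.mk hp
  refine le_antisymm ?_ ?_
  · -- attained value
    have hterm : ∀ i : Fin N, νp (α i) (p^(kk i) - 1) = ((α i - kk i : ℕ) : ℕ∞) := by
      intro i
      rw [hν]
      have hle : p^(kk i) - 1 ≤ p^(α i) - 1 :=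
        Nat.sub_le_sub_right (Nat.pow_le_pow_right hp.one_lt.le (hkα i)) 1
      rw [if_pos hle]
      have h1 : 1 ≤ p^(kk i) := Nat.one_le_pow _ _ hp.pos
      rw [Nat.sub_add_cancel h1, padicValNat.prime_pow]
    have hvq : ∑ i, νp (α i) (p^(kk i) - 1) = ((αtot - t0 : ℕ) : ℕ∞) := by
      rw [Finset.sum_congr rfl fun i _ => hterm i, ← Nat.cast_sum]
      congr 1
      have hsum : ∑ i, (α i - kk i) + ∑ i, kk i = ∑ i, α i := by
        rw [← Finset.sum_add_distrib]
        exact Finset.sum_congr rfl fun i _ => by have := hkα i; omega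
      omega
    refine sInf_le ⟨fun i => p^(kk i) - 1, ?_, hvq.symm⟩
    rw [hcosteq]
    exact ht0D
  · refine le_sInf ?_
    rintro v ⟨n, hnD, rfl⟩
    by_cases hball : ∀ i, n i ≤ p^(α i) - 1
    · set kn : Fin N → ℕ := fun i => padicValNat p (n i + 1) with hkndef
      have hdvd : ∀ i, p^(kn i) ≤ n i + 1 := fun i =>
        Nat.le_of_dvd (by omega) pow_padicValNat_dvd
      have hknα : ∀ i, kn i ≤ α i := by
        intro i
        have h2 : n i + 1 ≤ p^(α i) := by
          have h3 := Nat.one_le_pow (α i) p hp.pos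
          have h4 := hball i
          omega
        exact (Nat.pow_le_pow_iff_right hp.one_lt).mp (le_trans (hdvd i) h2)
      have hcostn : ∑ i, (p^(kn i) - 1) ≤ D := by
        refine le_trans (Finset.sum_le_sum fun i _ => ?_) hnD
        have := hdvd i
        omega
      have hTmem : (∑ i, kn i) ∈ (range (αtot+1)).filter
          (fun t => (p - 1) * ∑ k ∈ Icc 1 t, Dseq k ≤ D) := by
        rw [mem_filter, mem_range]
        constructor
        · have h5 : ∑ i, kn i ≤ ∑ i, α i := Finset.sum_le_sum fun i _ => hknα i
          omega
        · exact le_trans (LB kn hknα) hcostn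
      have hTle : ∑ i, kn i ≤ t0 := Finset.le_max' _ _ hTmem
      have hval : ∑ i, νp (α i) (n i) = ((αtot - ∑ i, kn i : ℕ) : ℕ∞) := by
        have hterm : ∀ i : Fin N, νp (α i) (n i) = ((α i - kn i : ℕ) : ℕ∞) := by
          intro i
          rw [hν, if_pos (hball i)]
        rw [Finset.sum_congr rfl fun i _ => hterm i, ← Nat.cast_sum]
        congr 1
        have hsum : ∑ i, (α i - kn i) + ∑ i, kn i = ∑ i, α i := by
          rw [← Finset.sum_add_distrib]
          exact Finset.sum_congr rfl fun i _ => by have := hknα i; omega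
        omega
      rw [hval]
      exact_mod_cast Nat.sub_le_sub_left hTle αtot
    · push_neg at hball
      obtain ⟨i0, hi0⟩ := hball
      have htop : νp (α i0) (n i0) = ⊤ := by
        rw [hν, if_neg (by omega)]
      refine le_trans le_top ?_
      rw [← htop]
      exact Finset.single_le_sum (f := fun i => νp (α i) (n i)) (fun i _ => zero_le) (mem_univ i0)
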